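/- Let k be a positive integer and let H and G be simple graphs such that G is not k-colourable and there is no graph homomorphism from H to G. Let m = |G| and let n ≥ m. Then the balanced blow-up G′ of G on n vertices is H-free, has minimum degree at least δ(G)·⌊n/m⌋ where δ(G) is the minimum degree of G, and any spanning subgraph of G′ obtained by deleting fewer than ⌊n/m⌋² edges is not k-colourable. -/

import Mathlib

open SimpleGraph

/-- `H` has a copy in `G`: an injective graph homomorphism from `H` to `G`,
i.e. `G` contains a subgraph isomorphic to `H`. -/
def Copies {α β : Type*} (H : SimpleGraph α) (G : SimpleGraph β) : Prop :=
  ∃ f : H →g G, Function.Injective f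

/-- The blow-up of a graph `F` in which each vertex `v` is replaced by an
independent set of size `s v`, and each edge by a complete bipartite graph. -/
def Blowup {α : Type*} (F : SimpleGraph α) (s : α → ℕ) :
    SimpleGraph (Σ v : α, Fin (s v)) where
  Adj x y := F.Adj x.1 y.1
  symm := ⟨fun _ _ h => F.symm.symm _ _ h⟩
  loopless := ⟨fun x h => F.loopless.irrefl x.1 h⟩

lemma aux_div_le {β : Type*} [Fintype β] (s : β → ℕ) (n : ℕ) (hsum : ∑ v, s v = n)
    (hbal : ∀ u v : β, s u ≤ s v + 1) (v : β) : n / Fintype.card β ≤ s v := by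
  have hm : 0 < Fintype.card β := Fintype.card_pos_iff.mpr ⟨v⟩
  have hlt : n < (s v + 1) * Fintype.card β := by
    rw [← hsum]
    calc ∑ u, s u < ∑ _u : β, (s v + 1) :=
          Finset.sum_lt_sum (fun u _ => hbal u v) ⟨v, Finset.mem_univ v, Nat.lt_succ_self _⟩
      _ = (s v + 1) * Fintype.card β := by
          rw [Finset.sum_const, Finset.card_univ, smul_eq_mul, mul_comm]
  exact Nat.lt_succ_iff.mp ((Nat.div_lt_iff_lt_mul hm).mpr hlt)

lemma aux_update_card {β : Type*} [Fintype β] [DecidableEq β] {q : ℕ} (u v : β) (huv : u ≠ v) (i j : Fin q) :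
    ((Finset.univ.filter (fun a : β → Fin q => a u = i ∧ a v = j)).card) * (q * q)
      ≤ q ^ Fintype.card β := by
  classical
  set S := Finset.univ.filter (fun a : β → Fin q => a u = i ∧ a v = j) with hS
  have hinj : Function.Injective
      (fun x : {a // a ∈ S} × Fin q × Fin q =>
        Function.update (Function.update (x.1 : β → Fin q) u x.2.1) v x.2.2) := by
    rintro ⟨⟨a, ha⟩, x, y⟩ ⟨⟨a', ha'⟩, x', y'⟩ h
    simp only at h
    have hy : y = y' := by
      have := congrFun h v
      simpa using this
    have hx : x = x' := by
      have := congrFun h u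
      simpa [Function.update_of_ne huv] using this
    simp only [hS, Finset.mem_filter, Finset.mem_univ, true_and] at ha ha'
    have haa : a = a' := by
      funext w
      by_cases hwu : w = u
      · subst hwu; rw [ha.1, ha'.1]
      · by_cases hwv : w = v
        · subst hwv; rw [ha.2, ha'.2]
        · have := congrFun h w
          simpa [Function.update_of_ne hwv, Function.update_of_ne hwu] using this
    subst haa hx hy
    rfl
  have hcard := Fintype.card_le_of_injective _ hinj
  simpa [Fintype.card_fun, Fintype.card_coe, mul_assoc] using hcard

/-- If `G` is not `k`-colourable and `H` is not homomorphic to `G`, then a balanced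
blow-up `G'` of `G` on `n ≥ m = |G|` vertices is `H`-free, has minimum degree at least
`δ(G) * ⌊n/m⌋`, and cannot be made `k`-colourable by deleting fewer than `⌊n/m⌋ ^ 2`
edges. -/
theorem statement9 {α β : Type*} [Fintype α] [Fintype β]
    (k : ℕ) (hk : 0 < k) (H : SimpleGraph α) (G : SimpleGraph β) [DecidableRel G.Adj]
    (hG : ¬ G.Colorable k) (hhom : IsEmpty (H →g G))
    (n : ℕ) (hn : Fintype.card β ≤ n)
    (s : β → ℕ) (hpos : ∀ v, 1 ≤ s v) (hsum : ∑ v, s v = n)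
    (hbal : ∀ u v : β, s u ≤ s v + 1) :
    ¬ Copies H (Blowup G s) ∧
      (∀ x : Σ v : β, Fin (s v),
        G.minDegree * (n / Fintype.card β) ≤ ((Blowup G s).neighborSet x).ncard) ∧
      ∀ G'' : SimpleGraph (Σ v : β, Fin (s v)), G'' ≤ Blowup G s →
        ((Blowup G s).edgeSet \ G''.edgeSet).ncard < (n / Fintype.card β) ^ 2 →
        ¬ G''.Colorable k := by
  classical
  have hq : ∀ v, n / Fintype.card β ≤ s v := aux_div_le s n hsum hbal
  refine ⟨?_, ?_, ?_⟩
  · rintro ⟨f, -⟩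
    exact hhom.elim ((⟨fun x => x.1, fun {a b} h => h⟩ : Blowup G s →g G).comp f)
  · intro x
    have hinj : Function.Injective
        (fun p : G.neighborSet x.1 × Fin (n / Fintype.card β) =>
          (⟨⟨(p.1 : β), Fin.castLE (hq _) p.2⟩, p.1.2⟩ : (Blowup G s).neighborSet x)) := by
      rintro ⟨⟨v, hv⟩, i⟩ ⟨⟨v', hv'⟩, i'⟩ h
      replace h := congrArg Subtype.val h
      simp only [Subtype.mk.injEq, Sigma.mk.inj_iff] at h
      obtain ⟨rfl, h2⟩ := h
      have : i = i' := Fin.castLE_injective _ (eq_of_heq h2)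
      subst this
      rfl
    calc G.minDegree * (n / Fintype.card β)
        ≤ G.degree x.1 * (n / Fintype.card β) :=
          Nat.mul_le_mul_right _ (G.minDegree_le_degree x.1)
      _ = Nat.card (G.neighborSet x.1 × Fin (n / Fintype.card β)) := by
          rw [Nat.card_eq_fintype_card, Fintype.card_prod, Fintype.card_fin,
            SimpleGraph.card_neighborSet_eq_degree]
      _ ≤ Nat.card ((Blowup G s).neighborSet x) := Nat.card_le_card_of_injective _ hinj
      _ = ((Blowup G s).neighborSet x).ncard := Nat.card_coe_set_eq _
  · intro G'' hle hcard hcol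
    set q := n / Fintype.card β with hqdef
    rcases Nat.eq_zero_or_pos q with h0 | hq1
    · rw [h0] at hcard; simp at hcard
    obtain ⟨C⟩ := hcol
    set eb : β ≃ Fin (Fintype.card β) := Fintype.equivFin β with heb
    have key : ∀ a : β → Fin q, ∃ u v : β, eb u < eb v ∧ G.Adj u v ∧
        ¬ G''.Adj ⟨u, Fin.castLE (hq u) (a u)⟩ ⟨v, Fin.castLE (hq v) (a v)⟩ := by
      intro a
      by_contra hcon
      push_neg at hcon
      refine hG ⟨SimpleGraph.Coloring.mk (fun v => C ⟨v, Fin.castLE (hq v) (a v)⟩) ?_⟩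
      intro u v huv
      have hne' : eb u ≠ eb v := fun h => G.ne_of_adj huv (eb.injective h)
      rcases hne'.lt_or_gt with h | h
      · exact C.valid (hcon u v h huv)
      · exact (C.valid (hcon v u h huv.symm)).symm
    choose fu fv hord hadj hnadj using key
    set g : (β → Fin q) → ((Σ v : β, Fin (s v)) × (Σ v : β, Fin (s v))) := fun a =>
      (⟨fu a, Fin.castLE (hq _) (a (fu a))⟩, ⟨fv a, Fin.castLE (hq _) (a (fv a))⟩) with hg
    set Img : Finset ((Σ v : β, Fin (s v)) × (Σ v : β, Fin (s v))) :=
      Finset.univ.image g with hImg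
    have hfib : (Finset.univ : Finset (β → Fin q)).card
        = ∑ p ∈ Img, (Finset.univ.filter (fun a => g a = p)).card :=
      Finset.card_eq_sum_card_fiberwise
        (fun a _ => Finset.mem_image_of_mem g (Finset.mem_univ a))
    have hordImg : ∀ p ∈ Img, eb p.1.1 < eb p.2.1 := by
      intro p hp
      obtain ⟨a, -, rfl⟩ := Finset.mem_image.mp hp
      exact hord a
    have hImgcard : Img.card < q ^ 2 := by
      have hinj2 : Set.InjOn Sym2.mk.uncurry (Img : Set (((v : β) × Fin (s v)) × ((v : β) × Fin (s v)))) := by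
        intro p hp p' hp' h
        change Sym2.mk p.1 p.2 = Sym2.mk p'.1 p'.2 at h
        rw [Sym2.mk_eq_mk_iff] at h
        rcases h with h | h
        · exact h
        · exfalso
          have h1 := hordImg p (by simpa using hp)
          have h2 := hordImg p' (by simpa using hp')
          rw [h] at h1
          simp only [Prod.fst_swap, Prod.snd_swap] at h1
          exact lt_asymm h1 h2
      have hsub : Img.image Sym2.mk.uncurry ⊆ ((Blowup G s).edgeSet \ G''.edgeSet).toFinset := by
        intro e he
        obtain ⟨p, hp, rfl⟩ := Finset.mem_image.mp he
        obtain ⟨a, -, rfl⟩ := Finset.mem_image.mp hp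
        simp only [Set.mem_toFinset, Set.mem_diff, mem_edgeSet]
        exact ⟨hadj a, hnadj a⟩
      have h1 : Img.card = (Img.image Sym2.mk.uncurry).card :=
        (Finset.card_image_of_injOn hinj2).symm
      rw [h1]
      calc (Img.image Sym2.mk.uncurry).card
          ≤ ((Blowup G s).edgeSet \ G''.edgeSet).toFinset.card := Finset.card_le_card hsub
        _ = ((Blowup G s).edgeSet \ G''.edgeSet).ncard :=
            (Set.ncard_eq_toFinset_card' _).symm
        _ < q ^ 2 := hcard
    have hfiber : ∀ p ∈ Img,
        (Finset.univ.filter (fun a : β → Fin q => g a = p)).card * (q * q)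
          ≤ q ^ Fintype.card β := by
      intro p hp
      obtain ⟨a₀, -, rfl⟩ := Finset.mem_image.mp hp
      have huv : fu a₀ ≠ fv a₀ := by
        intro h
        have := hord a₀
        rw [h] at this
        exact lt_irrefl _ this
      refine le_trans (Nat.mul_le_mul_right _ (Finset.card_le_card ?_))
        (aux_update_card (fu a₀) (fv a₀) huv (a₀ (fu a₀)) (a₀ (fv a₀)))
      intro a ha
      simp only [Finset.mem_filter, Finset.mem_univ, true_and] at ha ⊢
      have h1 : (g a).1 = (g a₀).1 := by rw [ha]
      have h2 : (g a).2 = (g a₀).2 := by rw [ha]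
      simp only [hg, Sigma.mk.inj_iff] at h1 h2
      obtain ⟨e1, e2⟩ := h1
      obtain ⟨e3, e4⟩ := h2
      rw [e1] at e2
      rw [e3] at e4
      exact ⟨Fin.castLE_injective _ (eq_of_heq e2), Fin.castLE_injective _ (eq_of_heq e4)⟩
    have hT : (Finset.univ : Finset (β → Fin q)).card = q ^ Fintype.card β := by
      simp [Fintype.card_fun]
    have hmain : q ^ Fintype.card β * (q * q) < q ^ 2 * q ^ Fintype.card β := by
      calc q ^ Fintype.card β * (q * q)
          = (∑ p ∈ Img, (Finset.univ.filter (fun a => g a = p)).card) * (q * q) := by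
            rw [← hfib, hT]
        _ = ∑ p ∈ Img, (Finset.univ.filter (fun a => g a = p)).card * (q * q) := by
            rw [Finset.sum_mul]
        _ ≤ ∑ _p ∈ Img, q ^ Fintype.card β := Finset.sum_le_sum hfiber
        _ = Img.card * q ^ Fintype.card β := by rw [Finset.sum_const, smul_eq_mul]
        _ < q ^ 2 * q ^ Fintype.card β :=
            mul_lt_mul_of_pos_right hImgcard (pow_pos hq1 _)
    have heq : q ^ 2 * q ^ Fintype.card β = q ^ Fintype.card β * (q * q) := by ring
    rw [heq] at hmain
    exact lt_irrefl _ hmain
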